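/- Let λ be a partition with ℓ = ℓ(λ) and let w be an invertible element of K such that every factor occurring in a denominator below is nonzero. Then ∏_{i=1}^{ℓ} ∏_{j=1}^{λ_i} f(q^{j−1} t^{1−i} w) = [(1−w)/(1−t^{−ℓ} w)] · ∏_{i=1}^{ℓ} (1−q^{λ_i} t^{−i} w)/(1−q^{λ_i} t^{1−i} w). -/

import Mathlib

open Finset

noncomputable section

/-- `f(w) = (1-w)(1-qt⁻¹w) / ((1-qw)(1-t⁻¹w))`. -/
def ffun {K : Type*} [Field K] (q t w : K) : K :=
  (1 - w) * (1 - q * t⁻¹ * w) / ((1 - q * w) * (1 - t⁻¹ * w))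

lemma inner_prod {K : Type*} [Field K] (q t : K) (hq : q ≠ 0) (u : K) (m : ℕ) (hm : 1 ≤ m)
    (h : ∀ j ∈ Finset.Icc 1 m,
      1 - q * (q ^ ((j : ℤ) - 1) * u) ≠ 0 ∧ 1 - t⁻¹ * (q ^ ((j : ℤ) - 1) * u) ≠ 0) :
    ∏ j ∈ Finset.Icc 1 m, ffun q t (q ^ ((j : ℤ) - 1) * u) =
      (1 - u) * (1 - q ^ (m : ℤ) * (t⁻¹ * u)) /
        ((1 - q ^ (m : ℤ) * u) * (1 - t⁻¹ * u)) := by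
  induction m, hm using Nat.le_induction with
  | base =>
      rw [show Finset.Icc 1 1 = {1} from rfl, Finset.prod_singleton]
      norm_num [ffun]
      ring_nf
  | succ m hm ih =>
      have h1 := h 1 (by simp only [Finset.mem_Icc]; omega)
      have hm1 := h (m+1) (by simp only [Finset.mem_Icc]; omega)
      have hmj := h m (by simp only [Finset.mem_Icc]; omega)
      have ecast : ((m+1 : ℕ) : ℤ) - 1 = (m : ℤ) := by push_cast; ring
      have eQ : q ^ (((m+1 : ℕ)) : ℤ) = q ^ (m : ℤ) * q := by
        rw [show (((m+1 : ℕ)) : ℤ) = (m : ℤ) + 1 by push_cast; ring, zpow_add_one₀ hq]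
      have eQ' : q * (q ^ ((m:ℤ) - 1) * u) = q ^ (m : ℤ) * u := by
        rw [← mul_assoc, mul_comm q, ← zpow_add_one₀ hq,
          show (m:ℤ) - 1 + 1 = (m:ℤ) by ring]
      rw [Finset.prod_Icc_succ_top (by omega : 1 ≤ m + 1),
        ih (fun j hj => h j (by simp [Finset.mem_Icc] at hj ⊢; omega)), ecast, eQ, ffun]
      set Q := q ^ (m : ℤ) with hQdef
      have n1 : 1 - Q * u ≠ 0 := by rw [← eQ']; exact hmj.1
      have n2 : 1 - t⁻¹ * u ≠ 0 := by
        have := h1.2; norm_num at this; exact this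
      have n3 : 1 - q * (Q * u) ≠ 0 := by
        have := hm1.1; rwa [ecast] at this
      have n4 : 1 - t⁻¹ * (Q * u) ≠ 0 := by
        have := hm1.2; rwa [ecast] at this
      rw [div_mul_div_comm, div_eq_div_iff
        (mul_ne_zero (mul_ne_zero n1 n2) (mul_ne_zero n3 n4))
        (mul_ne_zero (by rw [show Q * q * u = q * (Q * u) by ring]; exact n3) n2)]
      ring

lemma outer_prod {K : Type*} [Field K] (t w : K) (A B : ℕ → K) (l : ℕ)
    (hB : ∀ i ∈ Finset.Icc 1 l, B i ≠ 0)
    (hc : ∀ i ∈ Finset.Icc 1 l, 1 - t ^ (-(i : ℤ)) * w ≠ 0) :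
    (∏ i ∈ Finset.Icc 1 l,
        (1 - t ^ (1 - (i : ℤ)) * w) * A i / (B i * (1 - t ^ (-(i : ℤ)) * w))) *
      (1 - t ^ (-(l : ℤ)) * w) =
      (1 - w) * ∏ i ∈ Finset.Icc 1 l, A i / B i := by
  induction l with
  | zero => simp
  | succ l ih =>
      have hBl := hB (l+1) (by simp only [Finset.mem_Icc]; omega)
      have hcl := hc (l+1) (by simp only [Finset.mem_Icc]; omega)
      have e1 : (1 : ℤ) - ((l+1 : ℕ) : ℤ) = -(l : ℤ) := by push_cast; ring
      have ihh := ih (fun i hi => hB i (by simp only [Finset.mem_Icc] at *; omega))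
            (fun i hi => hc i (by simp only [Finset.mem_Icc] at *; omega))
      rw [Finset.prod_Icc_succ_top (by omega : 1 ≤ l+1),
          Finset.prod_Icc_succ_top (by omega : 1 ≤ l+1)]
      have hG : (1 - t ^ (1 - ((l+1:ℕ):ℤ)) * w) * A (l+1) /
            (B (l+1) * (1 - t ^ (-((l+1:ℕ):ℤ)) * w)) * (1 - t ^ (-((l+1:ℕ):ℤ)) * w) =
          (1 - t ^ (-(l:ℤ)) * w) * (A (l+1) / B (l+1)) := by
        rw [e1, div_mul_eq_mul_div, mul_div_mul_right _ _ hcl, mul_div_assoc]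
      calc (∏ k ∈ Finset.Icc 1 l, (1 - t ^ (1 - (k:ℤ)) * w) * A k / (B k * (1 - t ^ (-(k:ℤ)) * w))) *
              ((1 - t ^ (1 - ((l+1:ℕ):ℤ)) * w) * A (l+1) / (B (l+1) * (1 - t ^ (-((l+1:ℕ):ℤ)) * w))) *
              (1 - t ^ (-((l+1:ℕ):ℤ)) * w)
          = ((∏ k ∈ Finset.Icc 1 l, (1 - t ^ (1 - (k:ℤ)) * w) * A k / (B k * (1 - t ^ (-(k:ℤ)) * w))) *
              (1 - t ^ (-(l:ℤ)) * w)) * (A (l+1) / B (l+1)) := by rw [mul_assoc, hG]; ring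
        _ = ((1 - w) * ∏ k ∈ Finset.Icc 1 l, A k / B k) * (A (l+1) / B (l+1)) := by rw [ihh]
        _ = (1 - w) * ((∏ k ∈ Finset.Icc 1 l, A k / B k) * (A (l+1) / B (l+1))) := by ring

theorem stmt4 {K : Type*} [Field K] (q t : K) (hq : q ≠ 0) (ht : t ≠ 0)
    (w : K) (hw : w ≠ 0)
    (lam : ℕ → ℕ) (l : ℕ)
    (hmono : ∀ k, 1 ≤ k → lam (k + 1) ≤ lam k)
    (hlen : ∀ k, l < k → lam k = 0)
    (hlpos : l = 0 ∨ lam l ≠ 0)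
    (hf : ∀ i ∈ Finset.Icc 1 l, ∀ j ∈ Finset.Icc 1 (lam i),
      1 - q * (q ^ ((j : ℤ) - 1) * t ^ (1 - (i : ℤ)) * w) ≠ 0 ∧
      1 - t⁻¹ * (q ^ ((j : ℤ) - 1) * t ^ (1 - (i : ℤ)) * w) ≠ 0)
    (hd0 : 1 - t ^ (-(l : ℤ)) * w ≠ 0)
    (hd : ∀ i ∈ Finset.Icc 1 l, 1 - q ^ (lam i : ℤ) * t ^ (1 - (i : ℤ)) * w ≠ 0) :
    (∏ i ∈ Finset.Icc 1 l, ∏ j ∈ Finset.Icc 1 (lam i),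
        ffun q t (q ^ ((j : ℤ) - 1) * t ^ (1 - (i : ℤ)) * w)) =
      (1 - w) / (1 - t ^ (-(l : ℤ)) * w) *
        ∏ i ∈ Finset.Icc 1 l,
          (1 - q ^ (lam i : ℤ) * t ^ (-(i : ℤ)) * w) /
            (1 - q ^ (lam i : ℤ) * t ^ (1 - (i : ℤ)) * w) := by
  have mono : ∀ a b : ℕ, 1 ≤ a → a ≤ b → lam b ≤ lam a := by
    intro a b ha hab
    induction b, hab using Nat.le_induction with
    | base => exact le_refl _
    | succ b hb ih => exact le_trans (hmono b (by omega)) ih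
  have hpos : ∀ i ∈ Finset.Icc 1 l, 1 ≤ lam i := by
    intro i hi
    simp only [Finset.mem_Icc] at hi
    rcases hlpos with rfl | hl
    · omega
    · have := mono i l hi.1 hi.2; omega
  have e2 : ∀ i : ℕ, t⁻¹ * (t ^ (1 - (i:ℤ)) * w) = t ^ (-(i:ℤ)) * w := by
    intro i
    rw [← mul_assoc, ← zpow_neg_one, ← zpow_add₀ ht,
      show (-1 : ℤ) + (1 - (i:ℤ)) = -(i:ℤ) by ring]
  have hc : ∀ i ∈ Finset.Icc 1 l, 1 - t ^ (-(i : ℤ)) * w ≠ 0 := by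
    intro i hi
    have h1 := (hf i hi 1 (by simp only [Finset.mem_Icc]; exact ⟨le_refl _, hpos i hi⟩)).2
    norm_num at h1
    rwa [e2 i] at h1
  have hB : ∀ i ∈ Finset.Icc 1 l, 1 - q ^ (lam i : ℤ) * (t ^ (1 - (i:ℤ)) * w) ≠ 0 := by
    intro i hi
    have := hd i hi
    rwa [mul_assoc] at this
  have step : ∀ i ∈ Finset.Icc 1 l,
      ∏ j ∈ Finset.Icc 1 (lam i), ffun q t (q ^ ((j:ℤ)-1) * t ^ (1-(i:ℤ)) * w)
        = (1 - t ^ (1-(i:ℤ)) * w) * (1 - q ^ (lam i : ℤ) * (t ^ (-(i:ℤ)) * w)) /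
          ((1 - q ^ (lam i : ℤ) * (t ^ (1-(i:ℤ)) * w)) * (1 - t ^ (-(i:ℤ)) * w)) := by
    intro i hi
    have hyp : ∀ j ∈ Finset.Icc 1 (lam i),
        1 - q * (q ^ ((j : ℤ) - 1) * (t ^ (1 - (i : ℤ)) * w)) ≠ 0 ∧
        1 - t⁻¹ * (q ^ ((j : ℤ) - 1) * (t ^ (1 - (i : ℤ)) * w)) ≠ 0 := by
      intro j hj
      have := hf i hi j hj
      rw [mul_assoc] at this
      exact this
    have key := inner_prod q t hq (t ^ (1-(i:ℤ)) * w) (lam i) (hpos i hi) hyp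
    calc ∏ j ∈ Finset.Icc 1 (lam i), ffun q t (q ^ ((j:ℤ)-1) * t ^ (1-(i:ℤ)) * w)
        = ∏ j ∈ Finset.Icc 1 (lam i), ffun q t (q ^ ((j:ℤ)-1) * (t ^ (1-(i:ℤ)) * w)) := by
          apply Finset.prod_congr rfl; intro j _; rw [mul_assoc]
      _ = (1 - t ^ (1-(i:ℤ)) * w) * (1 - q ^ (lam i : ℤ) * (t⁻¹ * (t ^ (1-(i:ℤ)) * w))) /
          ((1 - q ^ (lam i : ℤ) * (t ^ (1-(i:ℤ)) * w)) * (1 - t⁻¹ * (t ^ (1-(i:ℤ)) * w))) := key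
      _ = _ := by rw [e2 i]
  rw [Finset.prod_congr rfl step]
  have houter := outer_prod t w
    (fun i => 1 - q ^ (lam i : ℤ) * (t ^ (-(i:ℤ)) * w))
    (fun i => 1 - q ^ (lam i : ℤ) * (t ^ (1-(i:ℤ)) * w)) l hB hc
  have hprod : (∏ i ∈ Finset.Icc 1 l,
      (1 - q ^ (lam i : ℤ) * (t ^ (-(i:ℤ)) * w)) / (1 - q ^ (lam i : ℤ) * (t ^ (1-(i:ℤ)) * w)))
      = ∏ i ∈ Finset.Icc 1 l,
      (1 - q ^ (lam i : ℤ) * t ^ (-(i:ℤ)) * w) / (1 - q ^ (lam i : ℤ) * t ^ (1-(i:ℤ)) * w) := by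
    apply Finset.prod_congr rfl; intro i _; rw [mul_assoc, mul_assoc]
  rw [div_mul_eq_mul_div, eq_div_iff hd0, ← hprod]
  exact houter

end
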